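/- In the algebra of operators on functions Z_2^n → Z_2, the identity s^b x^c = Σ_{k ⊆ b ∩ c} x^{c \ k} s^b holds for subsets b, c of [n], and hence x^a s^b x^c s^d = Σ_{e ⊆ b ∩ c} x^{a ∪ (c \ e)} s^{b+d}. -/

import Mathlib

open Finset

/-- The space of all functions `Z_2^n → Z_2`. -/
abbrev V (n : ℕ) : Type := (Fin n → ZMod 2) → ZMod 2

/-- Indicator vector of a subset of `[n]`, identifying `P[n]` with `Z_2^n`. -/
def ind {n : ℕ} (a : Finset (Fin n)) : Fin n → ZMod 2 :=
  fun i => if i ∈ a then 1 else 0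

/-- `m^a`: the indicator function of the single point `a`. -/
def mFun {n : ℕ} (a : Finset (Fin n)) : V n :=
  fun b => if b = ind a then 1 else 0

/-- `x^a`: the monomial function, `x^a(b) = 1` iff `a ⊆ b`. -/
def xFun {n : ℕ} (a : Finset (Fin n)) : V n :=
  fun b => if ∀ i ∈ a, b i = 1 then 1 else 0

/-- `w^a = ∏_{i ∈ a} (x_i + 1)`: `w^a(b) = 1` iff `b ⊆ [n] \ a`. -/
def wFun {n : ℕ} (a : Finset (Fin n)) : V n :=
  fun b => if ∀ i ∈ a, b i = 0 then 1 else 0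

/-- The shift operator `s_i`, `(s_i f)(x) = f(x + e_i)`. -/
def shiftOp {n : ℕ} (i : Fin n) : Module.End (ZMod 2) (V n) where
  toFun f := fun x => f (x + Pi.single i 1)
  map_add' f g := rfl
  map_smul' c f := by funext x; rfl

/-- The Boolean partial derivative `∂_i`, `(∂_i f)(x) = f(x + e_i) + f(x)`. -/
def derivOp {n : ℕ} (i : Fin n) : Module.End (ZMod 2) (V n) where
  toFun f := fun x => f (x + Pi.single i 1) + f x
  map_add' f g := by
    funext x
    show (f + g) _ + (f + g) _ = _
    simp only [Pi.add_apply]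
    ring
  map_smul' c f := by
    funext x
    show (c • f) _ + (c • f) _ = _
    simp only [Pi.smul_apply, RingHom.id_apply, smul_eq_mul]
    ring

lemma derivOp_eq_shiftOp_add_one {n : ℕ} (i : Fin n) :
    derivOp (n := n) i = shiftOp i + 1 :=
  LinearMap.ext fun _ => rfl

lemma shiftOp_comm {n : ℕ} (i j : Fin n) : Commute (shiftOp i) (shiftOp (n := n) j) := by
  apply LinearMap.ext; intro f; funext x
  show f (x + Pi.single i 1 + Pi.single j 1) = f (x + Pi.single j 1 + Pi.single i 1)
  rw [add_right_comm]

lemma derivOp_comm {n : ℕ} (i j : Fin n) : Commute (derivOp i) (derivOp (n := n) j) := by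
  rw [derivOp_eq_shiftOp_add_one, derivOp_eq_shiftOp_add_one]
  exact ((shiftOp_comm i j).add_right (Commute.one_right _)).add_left
    ((Commute.one_left _).add_right (Commute.one_right _))

/-- `∂^b = ∏_{i ∈ b} ∂_i`. -/
def derivPow {n : ℕ} (b : Finset (Fin n)) : Module.End (ZMod 2) (V n) :=
  b.noncommProd derivOp (fun i _ j _ _ => derivOp_comm i j)

/-- `s^b = ∏_{i ∈ b} s_i`. -/
def shiftPow {n : ℕ} (b : Finset (Fin n)) : Module.End (ZMod 2) (V n) :=
  b.noncommProd shiftOp (fun i _ j _ _ => shiftOp_comm i j)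

/-- The operator of multiplication by a function `g`. -/
noncomputable def mulOp {n : ℕ} (g : V n) : Module.End (ZMod 2) (V n) :=
  LinearMap.mulLeft (ZMod 2) g

/-- `X_i`: multiplication by the `i`-th coordinate function. -/
noncomputable def XOp {n : ℕ} (i : Fin n) : Module.End (ZMod 2) (V n) :=
  mulOp (fun x => x i)

lemma shiftPow_apply' {n : ℕ} (b : Finset (Fin n)) (f : V n) (x : Fin n → ZMod 2) :
    shiftPow b f x = f (x + ind b) := by
  induction b using Finset.induction_on generalizing x with
  | empty =>
      have : x + ind (∅ : Finset (Fin n)) = x := by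
        funext j; simp [ind]
      simp [shiftPow, this]
      rfl
  | insert i b hib ih =>
      erw [shiftPow, Finset.noncommProd_insert_of_notMem _ _ _ _ hib]
      show (shiftPow b f) (x + Pi.single i 1) = _
      rw [ih]
      congr 1
      funext j
      by_cases hj : j = i
      · subst hj
        simp [ind, hib, Pi.single_apply]
      · simp [ind, Finset.mem_insert, hj, Pi.single_apply]

lemma sum_subset_ind {n : ℕ} (s k0 : Finset (Fin n)) :
    (∑ k ∈ s.powerset, if k0 ⊆ k then (1 : ZMod 2) else 0) =
      if k0 = s then 1 else 0 := by
  induction s using Finset.induction_on generalizing k0 with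
  | empty =>
      rw [Finset.powerset_empty, Finset.sum_singleton]
      simp [Finset.subset_empty, eq_comm]
  | insert i s his ih =>
      rw [Finset.sum_powerset_insert his]
      simp only [Finset.subset_insert_iff]
      rw [ih, ih]
      by_cases hik : i ∈ k0
      · have h1 : k0 ≠ s := fun h => his (h ▸ hik)
        have h2 : k0.erase i = s ↔ k0 = insert i s := by
          constructor
          · intro h; rw [← h, Finset.insert_erase hik]
          · intro h; rw [h, Finset.erase_insert his]
        simp [h1, h2]
      · rw [Finset.erase_eq_of_notMem hik]
        have h1 : k0 ≠ insert i s := fun h => hik (h ▸ Finset.mem_insert_self i s)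
        rw [if_neg h1]
        split_ifs <;> decide

lemma xFun_sum {n : ℕ} (b c : Finset (Fin n)) (x : Fin n → ZMod 2) :
    (∑ k ∈ (b ∩ c).powerset, xFun (c \ k) x) = xFun c (x + ind b) := by
  classical
  set k0 : Finset (Fin n) := c.filter (fun i => x i ≠ 1) with hk0
  have h1 : ∀ k : Finset (Fin n), xFun (c \ k) x = if k0 ⊆ k then (1 : ZMod 2) else 0 := by
    intro k
    unfold xFun
    congr 1
    apply propext
    constructor
    · intro h j hj
      rw [hk0, Finset.mem_filter] at hj
      by_contra hjk
      exact hj.2 (h j (Finset.mem_sdiff.2 ⟨hj.1, hjk⟩))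
    · intro h j hj
      rw [Finset.mem_sdiff] at hj
      by_contra hx
      exact hj.2 (h (Finset.mem_filter.2 ⟨hj.1, hx⟩))
  rw [Finset.sum_congr rfl (fun k _ => h1 k), sum_subset_ind]
  have key : ∀ i, ((x i ≠ 1 ↔ i ∈ b) ↔ (x + ind b) i = 1) := by
    intro i
    simp only [Pi.add_apply, ind]
    rcases (by decide : ∀ v : ZMod 2, v = 0 ∨ v = 1) (x i) with hv | hv <;>
      by_cases hb : i ∈ b <;> simp [hv, hb] <;> decide
  have hiff : k0 = b ∩ c ↔ ∀ i ∈ c, (x + ind b) i = 1 := by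
    constructor
    · intro h i hi
      rw [← key i]
      constructor
      · intro hx
        have : i ∈ k0 := Finset.mem_filter.2 ⟨hi, hx⟩
        rw [h] at this; exact (Finset.mem_inter.1 this).1
      · intro hbi
        have : i ∈ b ∩ c := Finset.mem_inter.2 ⟨hbi, hi⟩
        rw [← h] at this; exact (Finset.mem_filter.1 this).2
    · intro h
      ext i
      simp only [hk0, Finset.mem_filter, Finset.mem_inter]
      constructor
      · rintro ⟨hi, hx⟩; exact ⟨((key i).2 (h i hi)).1 hx, hi⟩
      · rintro ⟨hbi, hi⟩; exact ⟨hi, ((key i).2 (h i hi)).2 hbi⟩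
  unfold xFun
  congr 1
  exact propext hiff

lemma mulOp_xFun_mul {n : ℕ} (a e : Finset (Fin n)) :
    mulOp (xFun a) * mulOp (xFun e) = mulOp (xFun (a ∪ e) : V n) := by
  have : (xFun a : V n) * xFun e = xFun (a ∪ e) := by
    funext y
    simp only [Pi.mul_apply, xFun, Finset.forall_mem_union, ite_and, ite_mul,
      one_mul, zero_mul]
  rw [mulOp, mulOp, mulOp, Module.End.mul_eq_comp, ← LinearMap.mulLeft_mul, this]

lemma ind_symmDiff {n : ℕ} (b d : Finset (Fin n)) :
    ind b + ind d = ind (symmDiff b d) := by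
  funext i
  simp only [Pi.add_apply, ind, Finset.mem_symmDiff]
  by_cases hb : i ∈ b <;> by_cases hd : i ∈ d <;> simp [hb, hd] <;> decide

lemma shiftPow_mul {n : ℕ} (b d : Finset (Fin n)) :
    shiftPow b * shiftPow d = shiftPow (n := n) (symmDiff b d) := by
  apply LinearMap.ext; intro f; funext x
  rw [Module.End.mul_apply, shiftPow_apply', shiftPow_apply', shiftPow_apply',
    add_assoc, ind_symmDiff]
/-- `s^b x^c = Σ_{k ⊆ b ∩ c} x^{c \ k} s^b` and hence
`x^a s^b x^c s^d = Σ_{e ⊆ b ∩ c} x^{a ∪ (c \ e)} s^{b+d}`. -/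
theorem shiftPow_xOp_relations (n : ℕ) (a b c d : Finset (Fin n)) :
    shiftPow b * mulOp (xFun c) =
      ∑ k ∈ (b ∩ c).powerset, mulOp (xFun (c \ k)) * shiftPow b ∧
    mulOp (xFun a) * shiftPow b * mulOp (xFun c) * shiftPow d =
      ∑ e ∈ (b ∩ c).powerset, mulOp (xFun (a ∪ (c \ e))) * shiftPow (symmDiff b d) := by
  have part1 : shiftPow b * mulOp (xFun c) =
      ∑ k ∈ (b ∩ c).powerset, mulOp (xFun (c \ k)) * shiftPow b := by
    apply LinearMap.ext; intro f; funext x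
    rw [Module.End.mul_apply, shiftPow_apply']
    have hL : (mulOp (xFun c) f) (x + ind b) = xFun c (x + ind b) * f (x + ind b) := rfl
    rw [hL]
    rw [LinearMap.sum_apply, Finset.sum_apply]
    have hR : ∀ k ∈ (b ∩ c).powerset,
        ((mulOp (xFun (c \ k)) * shiftPow b) f) x = xFun (c \ k) x * f (x + ind b) := by
      intro k _
      rw [Module.End.mul_apply]
      show xFun (c \ k) x * (shiftPow b f) x = _
      rw [shiftPow_apply']
    rw [Finset.sum_congr rfl hR, ← Finset.sum_mul, xFun_sum]
  refine ⟨part1, ?_⟩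
  calc mulOp (xFun a) * shiftPow b * mulOp (xFun c) * shiftPow d
      = mulOp (xFun a) * (shiftPow b * mulOp (xFun c)) * shiftPow d := by rw [mul_assoc (mulOp (xFun a))]
    _ = mulOp (xFun a) * (∑ e ∈ (b ∩ c).powerset, mulOp (xFun (c \ e)) * shiftPow b)
          * shiftPow d := by rw [part1]
    _ = ∑ e ∈ (b ∩ c).powerset,
          mulOp (xFun a) * (mulOp (xFun (c \ e)) * shiftPow b) * shiftPow d := by
        rw [Finset.mul_sum, Finset.sum_mul]
    _ = ∑ e ∈ (b ∩ c).powerset, mulOp (xFun (a ∪ (c \ e))) * shiftPow (symmDiff b d) := by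
        refine Finset.sum_congr rfl fun e _ => ?_
        rw [← mul_assoc, mulOp_xFun_mul, mul_assoc, shiftPow_mul]
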